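/- In the strong CAvoider-CAvoider P4 game played on the edge set of the complete graph K_n with n ≥ 5, the second player (Blue) has a winning strategy. -/

import Mathlib

set_option maxHeartbeats 1000000


/-!
Strong CAvoider-CAvoider P4 game on K_n, n ≥ 5: Blue (the second player) has a
winning strategy.

A play is modelled as the chronological list of claimed edges of `K_n`
(edges are non-diagonal elements of `Sym2 (Fin n)`); Red claims the edges at
even positions (0-based) and Blue those at odd positions.  In a legal play the
claimed edges are distinct and, in addition, each player's graph stays
connected throughout: every edge a player claims after his first one shares a
vertex with one of his previously claimed edges.  A strategy for Blue is a
function from histories to edges.  Blue wins if in every maximal legal play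
consistent with his strategy, Red's graph contains a copy of `P4` (the path on
four vertices) at some point at which (and before which) Blue's graph contains
no copy of `P4`,
i.e. Red loses strictly first.
-/

/-- The moves of the player moving at turns of parity `par` (Red = `0`,
Blue = `1`), extracted from the chronological list `h` of all moves. -/
def movesOf {α : Type*} (par : ℕ) (h : List α) : List α :=
  (h.zipIdx.filter fun p => p.2 % 2 = par).map Prod.fst

/-- The simple graph on `Fin n` formed by a list of edges. -/
def graphOf {n : ℕ} (l : List (Sym2 (Fin n))) : SimpleGraph (Fin n) :=
  SimpleGraph.fromEdgeSet {e | e ∈ l}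

/-- `G` contains the path on four vertices (with three edges) as a subgraph. -/
def HasP4 {V : Type*} (G : SimpleGraph V) : Prop :=
  ∃ a b c d : V, a ≠ b ∧ a ≠ c ∧ a ≠ d ∧ b ≠ c ∧ b ≠ d ∧ c ≠ d ∧
    G.Adj a b ∧ G.Adj b c ∧ G.Adj c d

/-- Each edge of the list, except the first, shares a vertex with an earlier
edge of the list; so the graph formed by the edges is connected at each stage. -/
def ConnectedMoves {n : ℕ} (l : List (Sym2 (Fin n))) : Prop :=
  ∀ i (hi : i < l.length), 0 < i → ∃ j, ∃ hj : j < i, ∃ v : Fin n,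
    v ∈ l.get ⟨i, hi⟩ ∧ v ∈ l.get ⟨j, hj.trans hi⟩

/-- A legal (partial) play: all claimed edges are distinct edges of `K_n`, and
each player's graph stays connected throughout the play. -/
def LegalPlay (n : ℕ) (h : List (Sym2 (Fin n))) : Prop :=
  h.Nodup ∧ (∀ e ∈ h, ¬ e.IsDiag) ∧
    ConnectedMoves (movesOf 0 h) ∧ ConnectedMoves (movesOf 1 h)

/-- The play `h` is consistent with the Blue strategy `f`: every move at an
odd (0-based) position is the one prescribed by `f` on the preceding history. -/
def ConsistentWith {n : ℕ} (f : List (Sym2 (Fin n)) → Sym2 (Fin n))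
    (h : List (Sym2 (Fin n))) : Prop :=
  ∀ i (hi : i < h.length), i % 2 = 1 → h.get ⟨i, hi⟩ = f (h.take i)

/-- A maximal legal play consistent with the Blue strategy `f`: it admits no
legal consistent extension. -/
def MaximalPlay (n : ℕ) (f : List (Sym2 (Fin n)) → Sym2 (Fin n))
    (h : List (Sym2 (Fin n))) : Prop :=
  LegalPlay n h ∧ ConsistentWith f h ∧
    ¬ ∃ e, LegalPlay n (h ++ [e]) ∧ ConsistentWith f (h ++ [e])

/-- Red loses strictly first in the play `h`, with respect to the forbidden
property `Forb`: after some initial segment Red's graph is forbidden while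
Blue's graph has not been forbidden up to that point. -/
def RedLosesFirst {n : ℕ} (Forb : SimpleGraph (Fin n) → Prop)
    (h : List (Sym2 (Fin n))) : Prop :=
  ∃ m ≤ h.length, Forb (graphOf (movesOf 0 (h.take m))) ∧
    ∀ k ≤ m, ¬ Forb (graphOf (movesOf 1 (h.take k)))

namespace Dev

theorem movesOf_nil {α : Type*} (par : ℕ) : movesOf par ([] : List α) = [] := rfl

theorem movesOf_concat {α : Type*} (par : ℕ) (h : List α) (e : α) :
    movesOf par (h ++ [e]) =
      movesOf par h ++ if h.length % 2 = par then [e] else [] := by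
  unfold movesOf
  rw [List.zipIdx_append, List.filter_append, List.map_append]
  congr 1
  simp [List.zipIdx]
  split <;> simp_all

theorem mem_movesOf {α : Type*} {par : ℕ} {h : List α} {e : α} :
    e ∈ movesOf par h ↔ ∃ i, ∃ hi : i < h.length, i % 2 = par ∧ h[i] = e := by
  induction h using List.reverseRecOn with
  | nil => simp [movesOf_nil]
  | append_singleton h a ih =>
    rw [movesOf_concat]
    simp only [List.mem_append, ih]
    constructor
    · rintro (⟨i, hi, hp, he⟩ | hmem)
      · exact ⟨i, by simp; omega, hp, by rw [List.getElem_append_left]; exact he⟩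
      · refine ⟨h.length, by simp, ?_, ?_⟩
        · by_contra hne
          simp [hne] at hmem
        · have : (if h.length % 2 = par then [a] else []) ≠ [] := by
            intro hc; rw [hc] at hmem; simp at hmem
          simp [List.getElem_concat_length]
          split at hmem <;> simp_all
    · rintro ⟨i, hi, hp, he⟩
      simp at hi
      rcases Nat.lt_or_ge i h.length with h' | h'
      · exact Or.inl ⟨i, h', hp, by rw [List.getElem_append_left h'] at he; exact he⟩
      · have hil : i = h.length := by omega
        subst hil
        rw [List.getElem_concat_length rfl] at he
        subst he
        simp [hp]

theorem length_movesOf {α : Type*} (h : List α) :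
    (movesOf 0 h).length = (h.length + 1) / 2 ∧ (movesOf 1 h).length = h.length / 2 := by
  induction h using List.reverseRecOn with
  | nil => simp [movesOf_nil]
  | append_singleton h a ih =>
    rw [movesOf_concat, movesOf_concat]
    simp only [List.length_append]
    rcases Nat.even_or_odd h.length with he | ho
    · obtain ⟨k, hk⟩ := he
      have h0 : h.length % 2 = 0 := by omega
      simp [h0, ih.1, ih.2]
      omega
    · obtain ⟨k, hk⟩ := ho
      have h0 : h.length % 2 = 1 := by omega
      simp [h0]
      constructor
      · simp [ih.1]; omega
      · simp [ih.2]; omega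

theorem movesOf_prefix {α : Type*} (par : ℕ) (l t : List α) :
    ∃ s, movesOf par (l ++ t) = movesOf par l ++ s := by
  induction t using List.reverseRecOn with
  | nil => exact ⟨[], by simp⟩
  | append_singleton t a ih =>
    obtain ⟨s, hs⟩ := ih
    rw [← List.append_assoc, movesOf_concat, hs]
    exact ⟨s ++ if (l ++ t).length % 2 = par then [a] else [], by simp⟩

theorem connectedMoves_of_prefix {n : ℕ} {l s : List (Sym2 (Fin n))}
    (h : ConnectedMoves (l ++ s)) : ConnectedMoves l := by
  intro i hi hpos
  obtain ⟨j, hj, v, hv1, hv2⟩ := h i (by simp; omega) hpos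
  refine ⟨j, hj, v, ?_, ?_⟩
  · simpa [List.get_eq_getElem, List.getElem_append_left hi] using hv1
  · simpa [List.get_eq_getElem, List.getElem_append_left (hj.trans hi)] using hv2

theorem connectedMoves_concat {n : ℕ} {l : List (Sym2 (Fin n))} {e : Sym2 (Fin n)} :
    ConnectedMoves (l ++ [e]) ↔
      ConnectedMoves l ∧ (l = [] ∨ ∃ e' ∈ l, ∃ v, v ∈ e ∧ v ∈ e') := by
  constructor
  · intro h
    refine ⟨connectedMoves_of_prefix h, ?_⟩
    rcases eq_or_ne l [] with rfl | hne
    · exact Or.inl rfl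
    · right
      have hlen : 0 < l.length := List.length_pos_iff.2 hne
      obtain ⟨j, hj, v, hv1, hv2⟩ := h l.length (by simp) hlen
      refine ⟨l[j]'hj, List.getElem_mem _, v, ?_, ?_⟩
      · simpa [List.get_eq_getElem, List.getElem_concat_length rfl] using hv1
      · simpa [List.get_eq_getElem, List.getElem_append_left hj] using hv2
  · rintro ⟨hc, hl⟩
    intro i hi hpos
    simp at hi
    rcases Nat.lt_or_ge i l.length with h' | h'
    · obtain ⟨j, hj, v, hv1, hv2⟩ := hc i h' hpos
      refine ⟨j, hj, v, ?_, ?_⟩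
      · simpa [List.get_eq_getElem, List.getElem_append_left h'] using hv1
      · simpa [List.get_eq_getElem, List.getElem_append_left (hj.trans h')] using hv2
    · have hil : i = l.length := by omega
      subst hil
      rcases hl with rfl | ⟨e', he', v, hv1, hv2⟩
      · simp at hpos
      · obtain ⟨j, hj, hje⟩ := List.mem_iff_getElem.1 he'
        refine ⟨j, hj, v, ?_, ?_⟩
        · simpa [List.get_eq_getElem, List.getElem_concat_length] using hv1
        · simpa [List.get_eq_getElem, List.getElem_append_left hj, hje] using hv2

end Dev


namespace Dev
variable {n : ℕ}

theorem graphOf_adj {l : List (Sym2 (Fin n))} {x y : Fin n} :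
    (graphOf l).Adj x y ↔ s(x, y) ∈ l ∧ x ≠ y := by
  simp [graphOf, SimpleGraph.fromEdgeSet_adj]

theorem hasP4_mono {l₁ l₂ : List (Sym2 (Fin n))} (hsub : ∀ e ∈ l₁, e ∈ l₂)
    (h : HasP4 (graphOf l₁)) : HasP4 (graphOf l₂) := by
  obtain ⟨a, b, c, d, h1, h2, h3, h4, h5, h6, ha, hb, hc⟩ := h
  rw [graphOf_adj] at ha hb hc
  exact ⟨a, b, c, d, h1, h2, h3, h4, h5, h6,
    graphOf_adj.2 ⟨hsub _ ha.1, ha.2⟩, graphOf_adj.2 ⟨hsub _ hb.1, hb.2⟩,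
    graphOf_adj.2 ⟨hsub _ hc.1, hc.2⟩⟩

theorem star_no_P4 {l : List (Sym2 (Fin n))} {c : Fin n}
    (hst : ∀ e ∈ l, c ∈ e) : ¬ HasP4 (graphOf l) := by
  rintro ⟨a, b, x, d, h1, h2, h3, h4, h5, h6, ha, hb, hc⟩
  rw [graphOf_adj] at ha hb hc
  have m1 := hst _ ha.1
  have m2 := hst _ hb.1
  have m3 := hst _ hc.1
  rw [Sym2.mem_iff] at m1 m2 m3
  rcases m1 with rfl | rfl
  · rcases m2 with h | h
    · exact h1 h
    · exact h2 h
  · rcases m3 with h | h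
    · exact h4 h
    · exact h5 h

-- two distinct members determine a Sym2
theorem sym2_eq_of_mem {e : Sym2 (Fin n)} {a b : Fin n} (ha : a ∈ e) (hb : b ∈ e)
    (hab : a ≠ b) : e = s(a, b) := by
  induction e with
  | _ x y =>
    rw [Sym2.mem_iff] at ha hb
    rw [Sym2.eq_iff]
    rcases ha with rfl | rfl <;> rcases hb with h | h <;> tauto

theorem legalPlay_take {h : List (Sym2 (Fin n))} (hl : LegalPlay n h) (k : ℕ) :
    LegalPlay n (h.take k) := by
  obtain ⟨hnd, hdiag, hc0, hc1⟩ := hl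
  refine ⟨hnd.sublist (List.take_sublist _ _), fun e he => hdiag e (List.mem_of_mem_take he), ?_, ?_⟩
  · obtain ⟨s, hs⟩ := movesOf_prefix 0 (h.take k) (h.drop k)
    rw [List.take_append_drop] at hs
    rw [hs] at hc0
    exact connectedMoves_of_prefix hc0
  · obtain ⟨s, hs⟩ := movesOf_prefix 1 (h.take k) (h.drop k)
    rw [List.take_append_drop] at hs
    rw [hs] at hc1
    exact connectedMoves_of_prefix hc1

theorem consistentWith_take {f : List (Sym2 (Fin n)) → Sym2 (Fin n)}
    {h : List (Sym2 (Fin n))} (hc : ConsistentWith f h) (k : ℕ) :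
    ConsistentWith f (h.take k) := by
  intro i hi hodd
  have hik : i < k := by simp at hi; omega
  have hih : i < h.length := by simp at hi; omega
  have := hc i hih hodd
  simp only [List.get_eq_getElem] at this ⊢
  rw [List.getElem_take, List.take_take, min_eq_left (le_of_lt hik)]
  exact this

theorem consistentWith_concat {f : List (Sym2 (Fin n)) → Sym2 (Fin n)}
    {h : List (Sym2 (Fin n))} {e : Sym2 (Fin n)} :
    ConsistentWith f (h ++ [e]) ↔
      ConsistentWith f h ∧ (h.length % 2 = 1 → e = f h) := by
  constructor
  · intro hc
    constructor
    · intro i hi hodd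
      have := hc i (by simp; omega) hodd
      simp only [List.get_eq_getElem] at this ⊢
      rw [List.getElem_append_left hi, List.take_append_of_le_length (le_of_lt hi)] at this
      exact this
    · intro hodd
      have := hc h.length (by simp) hodd
      simp only [List.get_eq_getElem] at this
      rw [List.getElem_concat_length rfl, List.take_left] at this
      exact this
  · rintro ⟨hc, he⟩ i hi hodd
    simp at hi
    simp only [List.get_eq_getElem]
    rcases Nat.lt_or_ge i h.length with h' | h'
    · rw [List.getElem_append_left h', List.take_append_of_le_length (le_of_lt h')]
      exact hc i h' hodd
    · have hil : i = h.length := by omega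
      subst hil
      rw [List.getElem_concat_length rfl, List.take_left]
      exact he hodd

theorem mem_split {h : List (Sym2 (Fin n))} {e : Sym2 (Fin n)} :
    e ∈ h ↔ e ∈ movesOf 0 h ∨ e ∈ movesOf 1 h := by
  constructor
  · intro he
    obtain ⟨i, hi, hie⟩ := List.mem_iff_getElem.1 he
    rcases Nat.even_or_odd i with hp | hp
    · exact Or.inl (mem_movesOf.2 ⟨i, hi, Nat.even_iff.mp hp, hie⟩)
    · exact Or.inr (mem_movesOf.2 ⟨i, hi, Nat.odd_iff.mp hp, hie⟩)
  · rintro (hm | hm) <;>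
    · obtain ⟨i, hi, _, hie⟩ := mem_movesOf.1 hm
      exact hie ▸ List.getElem_mem hi

theorem mem_movesOf_sub {par : ℕ} {h : List (Sym2 (Fin n))} {e : Sym2 (Fin n)}
    (hm : e ∈ movesOf par h) : e ∈ h := by
  obtain ⟨i, hi, _, hie⟩ := mem_movesOf.1 hm
  exact hie ▸ List.getElem_mem hi

theorem movesOf_take_mem {par k : ℕ} {h : List (Sym2 (Fin n))} {e : Sym2 (Fin n)}
    (hm : e ∈ movesOf par (h.take k)) : e ∈ movesOf par h := by
  obtain ⟨i, hi, hp, hie⟩ := mem_movesOf.1 hm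
  have hik : i < k := by simp at hi; omega
  have hih : i < h.length := by simp at hi; omega
  exact mem_movesOf.2 ⟨i, hih, hp, by rw [← hie, List.getElem_take]⟩

end Dev

namespace Dev
variable {n : ℕ}

def pick (hn : 5 ≤ n) (p : Fin n → Prop) [DecidablePred p] : Fin n :=
  ((List.finRange n).find? (fun v => decide (p v))).getD ⟨0, by omega⟩

theorem pick_spec (hn : 5 ≤ n) (p : Fin n → Prop) [DecidablePred p]
    (hex : ∃ v, p v) : p (pick hn p) := by
  obtain ⟨v, hv⟩ := hex
  unfold pick
  rcases hfind : (List.finRange n).find? (fun v => decide (p v)) with _ | a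
  · exfalso
    have := List.find?_eq_none.1 hfind v (List.mem_finRange v)
    simp [hv] at this
  · simpa using List.find?_some hfind

variable (hn : 5 ≤ n)

def dflt : Sym2 (Fin n) := s(⟨0, by omega⟩, ⟨1, by omega⟩)

def e0 (h : List (Sym2 (Fin n))) : Sym2 (Fin n) := h.getD 0 (dflt hn)
def e1 (h : List (Sym2 (Fin n))) : Sym2 (Fin n) := h.getD 1 (dflt hn)
def e2 (h : List (Sym2 (Fin n))) : Sym2 (Fin n) := h.getD 2 (dflt hn)

def bb1 (h : List (Sym2 (Fin n))) : Fin n := pick hn (fun v => ¬ v ∈ e0 hn h)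
def bb2 (h : List (Sym2 (Fin n))) : Fin n :=
  pick hn (fun v => ¬ v ∈ e0 hn h ∧ v ≠ bb1 hn h)
def ctr (h : List (Sym2 (Fin n))) : Fin n :=
  pick hn (fun v => v ∈ e1 hn h ∧ ¬ v ∈ e0 hn h ∧ ¬ v ∈ e2 hn h)
def rctr (h : List (Sym2 (Fin n))) : Fin n :=
  pick hn (fun v => v ∈ e0 hn h ∧ v ∈ e2 hn h)
def nxt (h : List (Sym2 (Fin n))) : Fin n :=
  pick hn (fun v => v ≠ ctr hn h ∧ ¬ s(ctr hn h, v) ∈ h)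

def strat (h : List (Sym2 (Fin n))) : Sym2 (Fin n) :=
  if h.length = 1 then s(bb1 hn h, bb2 hn h)
  else if h.length = 3 then s(ctr hn h, rctr hn h)
  else s(ctr hn h, nxt hn h)

theorem getD_take {α : Type*} (h : List α) (d : α) {i k : ℕ} (hik : i < k) :
    (h.take k).getD i d = h.getD i d := by
  simp [List.getD_eq_getElem?_getD, List.getElem?_take, hik]

theorem bb1_take {h : List (Sym2 (Fin n))} {k : ℕ} (hk : 1 ≤ k) :
    bb1 hn (h.take k) = bb1 hn h := by
  unfold bb1 e0; rw [getD_take h _ (by omega)]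

theorem bb2_take {h : List (Sym2 (Fin n))} {k : ℕ} (hk : 1 ≤ k) :
    bb2 hn (h.take k) = bb2 hn h := by
  unfold bb2 e0; rw [getD_take h _ (by omega), bb1_take hn hk]

theorem ctr_take {h : List (Sym2 (Fin n))} {k : ℕ} (hk : 3 ≤ k) :
    ctr hn (h.take k) = ctr hn h := by
  unfold ctr e0 e1 e2
  rw [getD_take h _ (by omega : (0:ℕ) < k), getD_take h _ (by omega : (1:ℕ) < k),
    getD_take h _ (by omega : (2:ℕ) < k)]

theorem rctr_take {h : List (Sym2 (Fin n))} {k : ℕ} (hk : 3 ≤ k) :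
    rctr hn (h.take k) = rctr hn h := by
  unfold rctr e0 e2
  rw [getD_take h _ (by omega : (0:ℕ) < k), getD_take h _ (by omega : (2:ℕ) < k)]

include hn in
theorem exists_not_mem (e : Sym2 (Fin n)) : ∃ v : Fin n, ¬ v ∈ e := by
  induction e with
  | _ p q =>
    by_contra hcon
    push_neg at hcon
    have h0 := hcon ⟨0, by omega⟩
    have h1 := hcon ⟨1, by omega⟩
    have h2 := hcon ⟨2, by omega⟩
    rw [Sym2.mem_iff] at h0 h1 h2
    rcases h0 with h0 | h0 <;> rcases h1 with h1 | h1 <;> rcases h2 with h2 | h2 <;>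
      simp [Fin.ext_iff, ← h0, ← h1, ← h2] at *

include hn in
theorem exists_not_mem_ne (e : Sym2 (Fin n)) (w : Fin n) :
    ∃ v : Fin n, ¬ v ∈ e ∧ v ≠ w := by
  induction e with
  | _ p q =>
    by_contra hcon
    push_neg at hcon
    have hall : ∀ v : Fin n, v = p ∨ v = q ∨ v = w := by
      intro v
      by_cases hm : v ∈ s(p, q)
      · rw [Sym2.mem_iff] at hm; tauto
      · exact Or.inr (Or.inr (hcon v hm))
    have h0 := hall ⟨0, by omega⟩
    have h1 := hall ⟨1, by omega⟩
    have h2 := hall ⟨2, by omega⟩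
    have h3 := hall ⟨3, by omega⟩
    rcases h0 with h0 | h0 | h0 <;> rcases h1 with h1 | h1 | h1 <;>
      rcases h2 with h2 | h2 | h2 <;> rcases h3 with h3 | h3 | h3 <;>
      simp [Fin.ext_iff, ← h0, ← h1, ← h2, ← h3] at *

theorem exists_avoid (s : Finset (Fin n)) (hcard : s.card < n) : ∃ v, v ∉ s := by
  by_contra hcon
  push_neg at hcon
  have : (Finset.univ : Finset (Fin n)).card ≤ s.card :=
    Finset.card_le_card (fun v _ => hcon v)
  simp at this
  omega

end Dev

namespace Dev
variable {n : ℕ} (hn : 5 ≤ n)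

theorem movesOf_three (a b c : Sym2 (Fin n)) (t : List (Sym2 (Fin n))) :
    ∃ s, movesOf 0 (a :: b :: c :: t) = [a, c] ++ s := by
  have h3 : (a :: b :: c :: t).take 3 = [a, b, c] := by simp
  obtain ⟨s, hs⟩ := movesOf_prefix 0 ((a :: b :: c :: t).take 3) ((a :: b :: c :: t).drop 3)
  rw [List.take_append_drop] at hs
  rw [h3] at hs
  have : movesOf 0 [a, b, c] = [a, c] := by
    simp [movesOf, List.zipIdx, List.filter]
  rw [this] at hs
  exact ⟨s, hs⟩

section Core
variable {f : List (Sym2 (Fin n)) → Sym2 (Fin n)} {h : List (Sym2 (Fin n))}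

/-- First blue move has the prescribed shape. -/
theorem h1_eq (hc : ConsistentWith (strat hn) h) (hlen : 2 ≤ h.length) :
    h[1]'(by omega) = s(bb1 hn h, bb2 hn h) := by
  have := hc 1 (by omega) rfl
  simp only [List.get_eq_getElem] at this
  rw [this]
  have hl1 : (h.take 1).length = 1 := by simp; omega
  rw [strat, if_pos hl1, bb1_take hn le_rfl, bb2_take hn le_rfl]

include hn in
theorem bb_props (hlen : 1 ≤ h.length) :
    ¬ bb1 hn h ∈ h[0]'(by omega) ∧ ¬ bb2 hn h ∈ h[0]'(by omega) ∧ bb1 hn h ≠ bb2 hn h := by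
  have he0 : e0 hn h = h[0]'(by omega) := List.getD_eq_getElem h _ (by omega)
  have p1 : ¬ bb1 hn h ∈ e0 hn h :=
    pick_spec hn _ (exists_not_mem hn (e0 hn h))
  have p2 : ¬ bb2 hn h ∈ e0 hn h ∧ bb2 hn h ≠ bb1 hn h :=
    pick_spec hn _ (exists_not_mem_ne hn (e0 hn h) (bb1 hn h))
  rw [he0] at p1 p2
  exact ⟨p1, p2.1, fun hh => p2.2 hh.symm⟩

/-- No vertex of Blue's first edge lies in Red's first edge. -/
theorem h1_disj (hc : ConsistentWith (strat hn) h) (hlen : 2 ≤ h.length) :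
    ∀ v, v ∈ h[1]'(by omega) → ¬ v ∈ h[0]'(by omega) := by
  intro v hv
  rw [h1_eq hn hc hlen, Sym2.mem_iff] at hv
  obtain ⟨p1, p2, _⟩ := bb_props (h := h) hn (by omega)
  rcases hv with rfl | rfl
  · exact p1
  · exact p2

theorem ctr_props (hl : LegalPlay n h) (hc : ConsistentWith (strat hn) h)
    (hlen : 3 ≤ h.length) :
    ctr hn h ∈ h[1]'(by omega) ∧ ¬ ctr hn h ∈ h[0]'(by omega) ∧
      ¬ ctr hn h ∈ h[2]'(by omega) := by
  have he0 : e0 hn h = h[0]'(by omega) := List.getD_eq_getElem h _ (by omega)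
  have he1 : e1 hn h = h[1]'(by omega) := List.getD_eq_getElem h _ (by omega)
  have he2 : e2 hn h = h[2]'(by omega) := List.getD_eq_getElem h _ (by omega)
  have hex : ∃ v, v ∈ (h[1]'(by omega)) ∧ ¬ v ∈ (h[0]'(by omega)) ∧ ¬ v ∈ (h[2]'(by omega)) := by
    obtain ⟨p1, p2, p12⟩ := bb_props (h := h) hn (by omega)
    have h1e := h1_eq hn hc (by omega)
    by_cases hb1 : bb1 hn h ∈ h[2]'(by omega)
    · by_cases hb2 : bb2 hn h ∈ h[2]'(by omega)
      · exfalso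
        have : h[2]'(by omega) = s(bb1 hn h, bb2 hn h) := sym2_eq_of_mem hb1 hb2 p12
        have heq : h[1]'(by omega) = h[2]'(by omega) := by rw [h1e, this]
        have := (hl.1.getElem_inj_iff.1 heq)
        omega
      · exact ⟨bb2 hn h, by rw [h1e, Sym2.mem_iff]; right; rfl, p2, hb2⟩
    · exact ⟨bb1 hn h, by rw [h1e, Sym2.mem_iff]; left; rfl, p1, hb1⟩
  have hexe : ∃ v, v ∈ e1 hn h ∧ ¬ v ∈ e0 hn h ∧ ¬ v ∈ e2 hn h := by
    rw [he0, he1, he2]; exact hex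
  have hp : ctr hn h ∈ e1 hn h ∧ ¬ ctr hn h ∈ e0 hn h ∧ ¬ ctr hn h ∈ e2 hn h :=
    pick_spec hn _ hexe
  rw [he0, he1, he2] at hp
  exact hp

theorem rctr_props (hl : LegalPlay n h) (hlen : 3 ≤ h.length) :
    rctr hn h ∈ h[0]'(by omega) ∧ rctr hn h ∈ h[2]'(by omega) := by
  have he0 : e0 hn h = h[0]'(by omega) := List.getD_eq_getElem h _ (by omega)
  have he2 : e2 hn h = h[2]'(by omega) := List.getD_eq_getElem h _ (by omega)
  have hex : ∃ v, v ∈ (h[0]'(by omega)) ∧ v ∈ (h[2]'(by omega)) := by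
    match h, hlen, hl with
    | a :: b :: c :: t, _, hl =>
      obtain ⟨s, hs⟩ := movesOf_three a b c t
      have hcm := hl.2.2.1
      rw [hs] at hcm
      obtain ⟨j, hj, v, hv1, hv2⟩ := hcm 1 (by simp) (by omega)
      have hj0 : j = 0 := by omega
      subst hj0
      refine ⟨v, ?_, ?_⟩
      · simpa using hv2
      · simpa using hv1
  have hexe : ∃ v, v ∈ e0 hn h ∧ v ∈ e2 hn h := by
    rw [he0, he2]; exact hex
  have hp : rctr hn h ∈ e0 hn h ∧ rctr hn h ∈ e2 hn h := pick_spec hn _ hexe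
  rw [he0, he2] at hp
  exact hp

theorem h3_eq (hc : ConsistentWith (strat hn) h) (hlen : 4 ≤ h.length) :
    h[3]'(by omega) = s(ctr hn h, rctr hn h) := by
  have := hc 3 (by omega) rfl
  simp only [List.get_eq_getElem] at this
  rw [this]
  have hl3 : (h.take 3).length = 3 := by simp; omega
  rw [strat, if_neg (by omega), if_pos hl3, ctr_take hn le_rfl, rctr_take hn le_rfl]

/-- Every Blue move contains the Blue centre. -/
theorem blue_all_ctr (hl : LegalPlay n h) (hc : ConsistentWith (strat hn) h)
    (hlen : 3 ≤ h.length) : ∀ e ∈ movesOf 1 h, ctr hn h ∈ e := by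
  intro e he
  obtain ⟨i, hi, hp, hie⟩ := mem_movesOf.1 he
  rcases Nat.lt_or_ge i 3 with h3 | h3
  · have hi1 : i = 1 := by omega
    subst hi1 hie
    exact (ctr_props hn hl hc hlen).1
  · have := hc i hi hp
    simp only [List.get_eq_getElem] at this
    rw [← hie, this]
    have hlt : (h.take i).length = i := by simp; omega
    rw [strat, if_neg (by omega)]
    split
    · rw [ctr_take hn h3]; exact Sym2.mem_mk_left _ _
    · rw [ctr_take hn h3]; exact Sym2.mem_mk_left _ _

/-- Blue's graph never contains a `P4` in a legal consistent play. -/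
theorem blue_noP4 (hl : LegalPlay n h) (hc : ConsistentWith (strat hn) h) :
    ¬ HasP4 (graphOf (movesOf 1 h)) := by
  rcases Nat.lt_or_ge h.length 2 with hlen | hlen
  · have : movesOf 1 h = [] := by
      match h, hlen with
      | [], _ => rfl
      | [a], _ => rfl
    rw [this]
    exact star_no_P4 (c := ⟨0, by omega⟩) (by simp)
  rcases Nat.lt_or_ge h.length 3 with hlen3 | hlen3
  · refine star_no_P4 (c := bb1 hn h) ?_
    intro e he
    obtain ⟨i, hi, hp, hie⟩ := mem_movesOf.1 he
    have hi1 : i = 1 := by omega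
    subst hi1 hie
    rw [h1_eq hn hc hlen]
    exact Sym2.mem_mk_left _ _
  · exact star_no_P4 (blue_all_ctr hn hl hc hlen3)

end Core
end Dev

namespace Dev
variable {n : ℕ} (hn : 5 ≤ n)

theorem movesOf_sublist {α : Type*} (par : ℕ) (h : List α) : List.Sublist (movesOf par h) h := by
  have h1 : List.Sublist (h.zipIdx.filter fun p => p.2 % 2 = par) h.zipIdx := List.filter_sublist
  have h2 := h1.map Prod.fst
  rwa [List.zipIdx_map_fst] at h2

theorem movesOf_nodup {α : Type*} {par : ℕ} {h : List α} (hnd : h.Nodup) :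
    (movesOf par h).Nodup := hnd.sublist (movesOf_sublist par h)

theorem rep_of_mem {e : Sym2 (Fin n)} {a : Fin n} (ha : a ∈ e) (hd : ¬ e.IsDiag) :
    ∃ w, w ≠ a ∧ e = s(a, w) := by
  refine ⟨Sym2.Mem.other' ha, ?_, (Sym2.other_spec' ha).symm⟩
  intro hw
  apply hd
  rw [← Sym2.other_spec' ha, hw]
  exact Sym2.mk_isDiag_iff.2 rfl

theorem p4_of {l : List (Sym2 (Fin n))} {a b c d : Fin n}
    (h1 : a ≠ b) (h2 : a ≠ c) (h3 : a ≠ d) (h4 : b ≠ c) (h5 : b ≠ d) (h6 : c ≠ d)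
    (m1 : s(a, b) ∈ l) (m2 : s(b, c) ∈ l) (m3 : s(c, d) ∈ l) :
    HasP4 (graphOf l) :=
  ⟨a, b, c, d, h1, h2, h3, h4, h5, h6,
    graphOf_adj.2 ⟨m1, h1⟩, graphOf_adj.2 ⟨m2, h4⟩, graphOf_adj.2 ⟨m3, h6⟩⟩

/-- Red's graph is a triangle through his centre. -/
def Tri (h : List (Sym2 (Fin n))) : Prop :=
  ∃ x y : Fin n, x ≠ y ∧ rctr hn h ≠ x ∧ rctr hn h ≠ y ∧ ctr hn h ≠ x ∧ ctr hn h ≠ y ∧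
    s(rctr hn h, x) ∈ movesOf 0 h ∧ s(rctr hn h, y) ∈ movesOf 0 h ∧
    s(x, y) ∈ movesOf 0 h ∧
    ∀ e ∈ movesOf 0 h, e = s(rctr hn h, x) ∨ e = s(rctr hn h, y) ∨ e = s(x, y)

def StarOrTri (h : List (Sym2 (Fin n))) : Prop :=
  (∀ e ∈ movesOf 0 h, rctr hn h ∈ e) ∨ Tri hn h

end Dev

namespace Dev
variable {n : ℕ} (hn : 5 ≤ n)

include hn in
/-- Main invariant: in a legal consistent play where Red has no `P4`, no Red
edge touches Blue's centre, and Red's graph is a star at his centre or a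
triangle. -/
theorem red_inv : ∀ h : List (Sym2 (Fin n)), LegalPlay n h →
    ConsistentWith (strat hn) h → ¬ HasP4 (graphOf (movesOf 0 h)) →
    3 ≤ h.length →
    (∀ e ∈ movesOf 0 h, ¬ ctr hn h ∈ e) ∧ (4 ≤ h.length → StarOrTri hn h) := by
  intro h
  induction h using List.reverseRecOn with
  | nil => intro _ _ _ hlen; simp at hlen
  | append_singleton h' e ih => ?_
  intro hl hc hnoP4 hlen
  simp only [List.length_append, List.length_singleton] at hlen
  -- facts about the prefix h'
  have hl' : LegalPlay n h' := by
    have := legalPlay_take hl h'.length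
    rwa [List.take_left] at this
  have hc' : ConsistentWith (strat hn) h' := by
    have := consistentWith_take hc h'.length
    rwa [List.take_left] at this
  have henotin : e ∉ h' := by
    have := hl.1
    rw [List.nodup_append] at this
    intro hce
    exact this.2.2 e hce e (by simp) rfl
  have hediag : ¬ e.IsDiag := hl.2.1 e (by simp)
  -- base case : length 3
  rcases Nat.lt_or_ge (h'.length + 1) 4 with h4 | h4
  · have hlen3 : h'.length + 1 = 3 := by omega
    constructor
    · intro e' he'
      obtain ⟨i, hi, hp, hie⟩ := mem_movesOf.1 he'
      simp only [List.length_append, List.length_singleton] at hi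
      obtain ⟨hc1, hc2, hc3⟩ := ctr_props hn hl hc (by simp; omega)
      have hi3 : i < 3 := by omega
      interval_cases i
      · subst hie
        simpa using hc2
      · exfalso; omega
      · subst hie
        simpa using hc3
    · intro hcon
      simp at hcon
      omega
  -- inductive case : length ≥ 4
  have hctr_eq : ctr hn h' = ctr hn (h' ++ [e]) := by
    have := ctr_take (h := h' ++ [e]) hn (k := h'.length) (by omega)
    rwa [List.take_left] at this
  have hrctr_eq : rctr hn h' = rctr hn (h' ++ [e]) := by
    have := rctr_take (h := h' ++ [e]) hn (k := h'.length) (by omega)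
    rwa [List.take_left] at this
  set c := ctr hn (h' ++ [e]) with hcdef
  set m := rctr hn (h' ++ [e]) with hmdef
  rcases Nat.even_or_odd h'.length with hpar | hpar
  · -- e is a Red move
    have hmod : h'.length % 2 = 0 := Nat.even_iff.mp hpar
    have hred : movesOf 0 (h' ++ [e]) = movesOf 0 h' ++ [e] := by
      rw [movesOf_concat, if_pos hmod]
    have hblue : movesOf 1 (h' ++ [e]) = movesOf 1 h' := by
      rw [movesOf_concat, if_neg (by omega)]; simp
    have hnoP4' : ¬ HasP4 (graphOf (movesOf 0 h')) := by
      intro hcon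
      exact hnoP4 (hasP4_mono (fun x hx => by rw [hred]; exact List.mem_append_left _ hx) hcon)
    have hlen' : 4 ≤ h'.length := by omega
    obtain ⟨ih2, ih3⟩ := ih hl' hc' hnoP4' (by omega)
    have hstar' := ih3 hlen'
    rw [hctr_eq] at ih2
    -- the new red edge is connected to an old one
    have hconn : ∃ e'' ∈ movesOf 0 h', ∃ v, v ∈ e ∧ v ∈ e'' := by
      have hcm := hl.2.2.1
      rw [hred] at hcm
      rcases (connectedMoves_concat.1 hcm).2 with hnil | hok
      · exfalso
        have := (length_movesOf h').1
        rw [hnil] at this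
        simp at this
        omega
      · exact hok
    obtain ⟨e'', he''mem, v, hve, hve''⟩ := hconn
    have he''diag : ¬ e''.IsDiag := hl'.2.1 e'' (mem_movesOf_sub he''mem)
    -- red edges of h' are nondiagonal, nodup, and avoid c
    have hrednd : (movesOf 0 h').Nodup := movesOf_nodup hl'.1
    rcases hstar' with hstar | htri
    · -- h' red graph is a star at m
      rw [hrctr_eq] at hstar
      -- representation of e''
      obtain ⟨u, hum, he''rep⟩ := rep_of_mem (hstar e'' he''mem) he''diag
      -- two distinct red edges of h'
      have hlenred : 2 ≤ (movesOf 0 h').length := by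
        have := (length_movesOf h').1
        omega
      set R := movesOf 0 h' with hRdef
      have hr1mem : R[0]'(by omega) ∈ R := List.getElem_mem _
      have hr2mem : R[1]'(by omega) ∈ R := List.getElem_mem _
      have hr12 : R[0]'(by omega) ≠ R[1]'(by omega) := by
        intro hcon
        have := hrednd.getElem_inj_iff.1 hcon
        omega
      obtain ⟨w1, hw1m, hr1rep⟩ := rep_of_mem (hstar _ hr1mem)
        (hl'.2.1 _ (mem_movesOf_sub hr1mem))
      obtain ⟨w2, hw2m, hr2rep⟩ := rep_of_mem (hstar _ hr2mem)
        (hl'.2.1 _ (mem_movesOf_sub hr2mem))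
      have hw12 : w1 ≠ w2 := by
        intro hcon
        exact hr12 (by rw [hr1rep, hr2rep, hcon])
      have hcm' : c ≠ m := by
        intro hcon
        exact ih2 e'' he''mem (hcon ▸ (hstar e'' he''mem))
      -- (A) : c ∉ e
      have hA : ¬ c ∈ e := by
        intro hce
        obtain ⟨t, htc, herep⟩ := rep_of_mem hce hediag
        have hte'' : t ∈ e'' := by
          have : v = c ∨ v = t := by
            rw [herep, Sym2.mem_iff] at hve
            exact hve
          rcases this with rfl | rfl
          · exact absurd hve'' (ih2 e'' he''mem)
          · exact hve''
        rcases eq_or_ne t m with rfl | htm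
        · -- e = s(c,m) = h[3], contradiction with nodup
          have h3e := h3_eq hn hc (by simp; omega)
          have hee : (h' ++ [e])[h'.length]'(by simp) = e := by
            rw [List.getElem_concat_length rfl]
          have heq : (h' ++ [e])[3]'(by simp; omega) = (h' ++ [e])[h'.length]'(by simp) := by
            rw [hee, h3e, ← hcdef, ← hmdef, herep]
          have := hl.1.getElem_inj_iff.1 heq
          omega
        · -- P4 through a second leaf
          have ht : t = u := by
            rw [he''rep, Sym2.mem_iff] at hte''
            tauto
          subst ht
          -- find another leaf y ≠ t among w1 w2
          have hy : ∃ y, y ≠ t ∧ s(m, y) ∈ R := by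
            rcases eq_or_ne w1 t with rfl | hne
            · exact ⟨w2, fun hcon => hw12 hcon.symm, by rw [← hr2rep]; exact hr2mem⟩
            · exact ⟨w1, hne, by rw [← hr1rep]; exact hr1mem⟩
          obtain ⟨y, hyt, hymem⟩ := hy
          have hym : y ≠ m := by
            intro hcon
            have := hl'.2.1 _ (mem_movesOf_sub hymem)
            rw [hcon] at this
            exact this (Sym2.mk_isDiag_iff.2 rfl)
          have hyc : y ≠ c := by
            intro hcon
            exact ih2 _ hymem (by rw [Sym2.mem_iff]; right; exact hcon.symm)
          apply hnoP4
          rw [hred]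
          refine p4_of (a := y) (b := m) (c := t) (d := c) hym hyt hyc
            (fun hcon => htm hcon.symm) hcm'.symm htc ?_ ?_ ?_
          · rw [Sym2.eq_swap]
            exact List.mem_append_left _ hymem
          · rw [← he''rep]
            exact List.mem_append_left _ he''mem
          · rw [Sym2.eq_swap, ← herep]
            exact List.mem_append_right _ (by simp)
      constructor
      · -- all red edges avoid c
        intro e' he'
        rw [hred] at he'
        rcases List.mem_append.1 he' with hold | hnew
        · exact ih2 e' hold
        · simp at hnew
          subst hnew
          exact hA
      · -- star or triangle for the extended play
        intro _
        by_cases hme : m ∈ e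
        · left
          intro e' he'
          rw [hred] at he'
          rcases List.mem_append.1 he' with hold | hnew
          · exact hstar e' hold
          · simp at hnew; subst hnew; exact hme
        · -- e attaches at a leaf u'
          have hvm : v ≠ m := fun hcon => hme (hcon ▸ hve)
          have hvu : v = u := by
            rw [he''rep, Sym2.mem_iff] at hve''
            tauto
          subst hvu
          obtain ⟨z, hzv, herep⟩ := rep_of_mem hve hediag
          have hzm : z ≠ m := by
            intro hcon
            apply hme
            rw [herep, Sym2.mem_iff]
            right; exact hcon.symm
          have hvm' : v ≠ m := hvm
          -- if red has ≥ 3 edges, P4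
          rcases Nat.lt_or_ge R.length 3 with hR2 | hR3
          · -- exactly two red edges
            have hRlen : R.length = 2 := by omega
            obtain ⟨r1, r2, hRform⟩ := List.length_eq_two.1 hRlen
            have hr1v : r1 = s(m, w1) := by
              have h01 : R[0]'(by omega) = r1 := by simp [hRform]
              rw [← h01, ← hr1rep]
            have hr2v : r2 = s(m, w2) := by
              have h01 : R[1]'(by omega) = r2 := by simp [hRform]
              rw [← h01, ← hr2rep]
            have hcw1 : c ≠ w1 := by
              intro hcon
              exact ih2 _ hr1mem (by rw [hr1rep, Sym2.mem_iff]; right; exact hcon)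
            have hcw2 : c ≠ w2 := by
              intro hcon
              exact ih2 _ hr2mem (by rw [hr2rep, Sym2.mem_iff]; right; exact hcon)
            have hvw : v = w1 ∨ v = w2 := by
              have he''12 : e'' = r1 ∨ e'' = r2 := by
                rw [hRform] at he''mem
                simpa using he''mem
              rcases he''12 with h12 | h12 <;> rw [h12] at hve''
              · rw [hr1v, Sym2.mem_iff] at hve''
                rcases hve'' with hx | hx
                · exact absurd hx hvm'
                · exact Or.inl hx
              · rw [hr2v, Sym2.mem_iff] at hve''
                rcases hve'' with hx | hx
                · exact absurd hx hvm'
                · exact Or.inr hx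
            have hkey : ∃ ww, ww ≠ v ∧ ww ≠ m ∧ c ≠ ww ∧ c ≠ v ∧
                s(m, v) ∈ R ∧ s(m, ww) ∈ R ∧
                ∀ e' ∈ R, e' = s(m, v) ∨ e' = s(m, ww) := by
              rcases hvw with h1 | h1
              · refine ⟨w2, by rw [h1]; exact hw12.symm, hw2m, hcw2,
                  by rw [h1]; exact hcw1, by rw [h1, ← hr1rep]; exact hr1mem,
                  hr2rep ▸ hr2mem, ?_⟩
                intro e' he'
                rw [hRform] at he'
                simp only [List.mem_cons, List.mem_singleton, List.not_mem_nil,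
                  or_false] at he'
                rcases he' with h12 | h12
                · left; rw [h12, hr1v, h1]
                · right; rw [h12, hr2v]
              · refine ⟨w1, by rw [h1]; exact hw12, hw1m, hcw1,
                  by rw [h1]; exact hcw2, by rw [h1, ← hr2rep]; exact hr2mem,
                  hr1rep ▸ hr1mem, ?_⟩
                intro e' he'
                rw [hRform] at he'
                simp only [List.mem_cons, List.mem_singleton, List.not_mem_nil,
                  or_false] at he'
                rcases he' with h12 | h12
                · right; rw [h12, hr1v]
                · left; rw [h12, hr2v, h1]
            obtain ⟨ww, hwwv, hwwm, hcww, hcv, hmv, hmww, hRall⟩ := hkey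
            rcases eq_or_ne z ww with hzww | hzww
            · -- triangle
              right
              refine ⟨v, z, hzv.symm, fun hcon => hvm' hcon.symm,
                fun hcon => hzm hcon.symm, hcv, hzww ▸ hcww, ?_, ?_, ?_, ?_⟩
              · rw [hred]; exact List.mem_append_left _ hmv
              · rw [hred]; exact List.mem_append_left _ (hzww ▸ hmww)
              · rw [hred]
                refine List.mem_append_right _ ?_
                rw [← herep]; simp
              · intro e' he'
                rw [hred] at he'
                rcases List.mem_append.1 he' with hold | hnew
                · rcases hRall e' hold with h12 | h12
                  · left; exact h12
                  · right; left; rw [h12, hzww]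
                · simp at hnew
                  rw [hnew, herep]
                  right; right; rfl
            · -- P4 (ww, m, v, z)
              exfalso
              apply hnoP4
              rw [hred]
              refine p4_of (a := ww) (b := m) (c := v) (d := z) hwwm hwwv
                (fun hcon => hzww hcon.symm) (fun hcon => hvm' hcon.symm)
                hzm.symm hzv.symm ?_ ?_ ?_
              · rw [Sym2.eq_swap]
                exact List.mem_append_left _ hmww
              · exact List.mem_append_left _ hmv
              · rw [← herep]
                exact List.mem_append_right _ (by simp)
          · -- ≥ 3 red edges : always P4
            exfalso
            have hr3mem : R[2]'(by omega) ∈ R := List.getElem_mem _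
            obtain ⟨w3, hw3m, hr3rep⟩ := rep_of_mem (hstar _ hr3mem)
              (hl'.2.1 _ (mem_movesOf_sub hr3mem))
            have hw13 : w1 ≠ w3 := by
              intro hcon
              have : R[0]'(by omega) = R[2]'(by omega) := by rw [hr1rep, hr3rep, hcon]
              have := hrednd.getElem_inj_iff.1 this
              omega
            have hw23 : w2 ≠ w3 := by
              intro hcon
              have : R[1]'(by omega) = R[2]'(by omega) := by rw [hr2rep, hr3rep, hcon]
              have := hrednd.getElem_inj_iff.1 this
              omega
            -- choose y among w1 w2 w3 distinct from v and z
            have hy : ∃ y, y ≠ v ∧ y ≠ z ∧ y ≠ m ∧ s(m, y) ∈ R := by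
              by_cases h1v : w1 = v
              · by_cases h2z : w2 = z
                · refine ⟨w3, ?_, ?_, fun hcon => hw3m hcon, by rw [← hr3rep]; exact hr3mem⟩
                  · rw [← h1v]; exact fun hcon => hw13 hcon.symm
                  · rw [← h2z]; exact fun hcon => hw23 hcon.symm
                · exact ⟨w2, by rw [← h1v]; exact fun hcon => hw12 hcon.symm, h2z,
                    fun hcon => hw2m hcon, by rw [← hr2rep]; exact hr2mem⟩
              · by_cases h1z : w1 = z
                · by_cases h2v : w2 = v
                  · refine ⟨w3, ?_, ?_, fun hcon => hw3m hcon, by rw [← hr3rep]; exact hr3mem⟩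
                    · rw [← h2v]; exact fun hcon => hw23 hcon.symm
                    · rw [← h1z]; exact fun hcon => hw13 hcon.symm
                  · exact ⟨w2, h2v, by rw [← h1z]; exact fun hcon => hw12 hcon.symm,
                      fun hcon => hw2m hcon, by rw [← hr2rep]; exact hr2mem⟩
                · exact ⟨w1, h1v, h1z, fun hcon => hw1m hcon,
                    by rw [← hr1rep]; exact hr1mem⟩
            obtain ⟨y, hyv, hyz, hym, hymem⟩ := hy
            apply hnoP4
            rw [hred]
            refine p4_of (a := y) (b := m) (c := v) (d := z) hym hyv hyz
              (fun hcon => hvm' hcon.symm) hzm.symm hzv.symm ?_ ?_ ?_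
            · rw [Sym2.eq_swap]
              exact List.mem_append_left _ hymem
            · rw [← he''rep]
              exact List.mem_append_left _ he''mem
            · rw [← herep]
              exact List.mem_append_right _ (by simp)
    · -- h' red graph is a triangle : any extension is a P4, contradiction
      exfalso
      obtain ⟨x, y, hxy, hmx, hmy, hcx, hcy, hm1, hm2, hm3, hall⟩ := htri
      rw [hrctr_eq] at hmx hmy hm1 hm2 hall
      have hvxy : v = m ∨ v = x ∨ v = y := by
        rcases hall e'' he''mem with h12 | h12 | h12 <;> rw [h12, Sym2.mem_iff] at hve''
        · rcases hve'' with hx | hx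
          · exact Or.inl hx
          · exact Or.inr (Or.inl hx)
        · rcases hve'' with hx | hx
          · exact Or.inl hx
          · exact Or.inr (Or.inr hx)
        · rcases hve'' with hx | hx
          · exact Or.inr (Or.inl hx)
          · exact Or.inr (Or.inr hx)
      obtain ⟨z, hzv, herep⟩ := rep_of_mem hve hediag
      have hznot : z ≠ m ∧ z ≠ x ∧ z ≠ y := by
        refine ⟨?_, ?_, ?_⟩ <;> intro hcon <;>
          rcases hvxy with hv | hv | hv <;>
          first
          | (rw [hcon] at hzv; rw [hv] at hzv; exact hzv rfl)
          | (apply henotin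
             apply mem_movesOf_sub (par := 0)
             rw [herep, hv, hcon]
             first
             | exact hm1
             | exact hm2
             | exact hm3
             | (rw [Sym2.eq_swap]
                first | exact hm1 | exact hm2 | exact hm3))
      obtain ⟨hzm, hzx, hzy⟩ := hznot
      apply hnoP4
      rw [hred]
      rcases hvxy with hv | hv | hv
      · -- path x - y - v(=m) - z
        refine p4_of (a := x) (b := y) (c := v) (d := z) hxy
          (by rw [hv]; exact fun hcon => hmx hcon.symm)
          (fun hcon => hzx hcon.symm)
          (by rw [hv]; exact fun hcon => hmy hcon.symm)
          (fun hcon => hzy hcon.symm) hzv.symm ?_ ?_ ?_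
        · exact List.mem_append_left _ hm3
        · rw [hv, Sym2.eq_swap]
          exact List.mem_append_left _ hm2
        · rw [← herep]
          exact List.mem_append_right _ (by simp)
      · -- path y - m - v(=x) - z
        refine p4_of (a := y) (b := m) (c := v) (d := z)
          (fun hcon => hmy hcon.symm)
          (by rw [hv]; exact fun hcon => hxy hcon.symm)
          (fun hcon => hzy hcon.symm)
          (by rw [hv]; exact hmx)
          (fun hcon => hzm hcon.symm) hzv.symm ?_ ?_ ?_
        · rw [Sym2.eq_swap]
          exact List.mem_append_left _ hm2
        · rw [hv]
          exact List.mem_append_left _ hm1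
        · rw [← herep]
          exact List.mem_append_right _ (by simp)
      · -- path x - m - v(=y) - z
        refine p4_of (a := x) (b := m) (c := v) (d := z)
          (fun hcon => hmx hcon.symm)
          (by rw [hv]; exact hxy)
          (fun hcon => hzx hcon.symm)
          (by rw [hv]; exact hmy)
          (fun hcon => hzm hcon.symm) hzv.symm ?_ ?_ ?_
        · rw [Sym2.eq_swap]
          exact List.mem_append_left _ hm1
        · rw [hv]
          exact List.mem_append_left _ hm2
        · rw [← herep]
          exact List.mem_append_right _ (by simp)
  · -- e is a Blue move : red graph unchanged
    have hmod : h'.length % 2 = 1 := Nat.odd_iff.mp hpar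
    have hred : movesOf 0 (h' ++ [e]) = movesOf 0 h' := by
      rw [movesOf_concat, if_neg (by omega)]; simp
    have hnoP4' : ¬ HasP4 (graphOf (movesOf 0 h')) := by rwa [hred] at hnoP4
    have hlen' : 3 ≤ h'.length := by omega
    obtain ⟨ih2, ih3⟩ := ih hl' hc' hnoP4' hlen'
    constructor
    · intro e' he'
      rw [hred] at he'
      rw [← hctr_eq]
      exact ih2 e' he'
    · intro _
      rcases Nat.lt_or_ge h'.length 4 with h'4 | h'4
      · -- h'.length = 3 : red = two edges through m, star
        left
        intro e' he'
        rw [hred] at he'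
        obtain ⟨i, hi, hp, hie⟩ := mem_movesOf.1 he'
        have hlen3 : h'.length = 3 := by omega
        obtain ⟨hr0, hr2⟩ := rctr_props hn hl (by simp; omega)
        have hll : (h' ++ [e]).length = h'.length + 1 := by simp
        have hg0 : (h' ++ [e])[0]'(by omega) = h'[0]'(by omega) :=
          List.getElem_append_left (by omega)
        have hg2 : (h' ++ [e])[2]'(by omega) = h'[2]'(by omega) :=
          List.getElem_append_left (by omega)
        rw [hg0] at hr0
        rw [hg2] at hr2
        have hi3 : i < 3 := by omega
        interval_cases i
        · subst hie
          simpa using hr0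
        · exfalso; omega
        · subst hie
          simpa using hr2
      · rcases ih3 h'4 with hstar | htri
        · left
          intro e' he'
          rw [hred] at he'
          have := hstar e' he'
          rwa [hrctr_eq] at this
        · right
          obtain ⟨x, y, h1, h2, h3, h4, h5, h6, h7, h8, h9⟩ := htri
          rw [hrctr_eq] at h2 h3 h6 h7 h9
          rw [hctr_eq] at h4 h5
          refine ⟨x, y, h1, h2, h3, h4, h5, ?_, ?_, ?_, ?_⟩
          · rw [hred]; exact h6
          · rw [hred]; exact h7
          · rw [hred]; exact h8
          · intro e' he'
            rw [hred] at he'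
            exact h9 e' he'

end Dev

namespace Dev
variable {n : ℕ} (hn : 5 ≤ n)

theorem sym2_exists_mem (e : Sym2 (Fin n)) : ∃ v, v ∈ e := by
  induction e with
  | _ p q => exact ⟨p, Sym2.mem_mk_left _ _⟩

include hn in
/-- Size bound : in a good play Red has at most `n-2` edges. -/
theorem red_card {h : List (Sym2 (Fin n))} (hl : LegalPlay n h)
    (hc : ConsistentWith (strat hn) h) (hnoP4 : ¬ HasP4 (graphOf (movesOf 0 h)))
    (hlen : 4 ≤ h.length) : (movesOf 0 h).length ≤ n - 2 := by
  obtain ⟨hii, hiii⟩ := red_inv hn h hl hc hnoP4 (by omega)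
  have hnd : (movesOf 0 h).Nodup := movesOf_nodup hl.1
  have hcard : (movesOf 0 h).length = (movesOf 0 h).toFinset.card :=
    (List.toFinset_card_of_nodup hnd).symm
  rcases hiii hlen with hstar | htri
  · -- star case
    set R := movesOf 0 h with hR
    set m := rctr hn h with hm
    set c := ctr hn h with hcd
    have hRlen : 2 ≤ R.length := by
      have := (length_movesOf h).1
      rw [← hR] at this
      omega
    have hR0 : R[0]'(by omega) ∈ R := List.getElem_mem _
    have hcm : c ≠ m := by
      intro hcon
      exact hii _ hR0 (hcon ▸ hstar _ hR0)
    have hsub : R.toFinset ⊆ ((Finset.univ.erase m).erase c).image (fun v => s(m, v)) := by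
      intro e he
      rw [List.mem_toFinset] at he
      obtain ⟨w, hwm, hrep⟩ := rep_of_mem (hstar e he) (hl.2.1 e (mem_movesOf_sub he))
      refine Finset.mem_image.2 ⟨w, ?_, hrep.symm⟩
      refine Finset.mem_erase.2 ⟨?_, Finset.mem_erase.2 ⟨hwm, Finset.mem_univ w⟩⟩
      intro hcon
      exact hii e he (by rw [hrep, ← hcon, Sym2.mem_iff]; right; rfl)
    have h1 : R.toFinset.card ≤ ((Finset.univ.erase m).erase c).card :=
      le_trans (Finset.card_le_card hsub) (Finset.card_image_le)
    have h2 : ((Finset.univ.erase m).erase c).card = n - 2 := by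
      rw [Finset.card_erase_of_mem (Finset.mem_erase.2 ⟨hcm, Finset.mem_univ c⟩),
        Finset.card_erase_of_mem (Finset.mem_univ m)]
      simp only [Finset.card_univ, Fintype.card_fin]
      omega
    rw [hcard]
    exact h1.trans (le_of_eq h2)
  · obtain ⟨x, y, hxy, _, _, _, _, _, _, _, hall⟩ := htri
    have hsub : (movesOf 0 h).toFinset ⊆
        {s(rctr hn h, x), s(rctr hn h, y), s(x, y)} := by
      intro e he
      rw [List.mem_toFinset] at he
      rcases hall e he with h12 | h12 | h12 <;> simp [h12]
    have h1 := le_trans (Finset.card_le_card hsub) (Finset.card_insert_le _ _)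
    have h2 := Finset.card_insert_le s(rctr hn h, y) ({s(x, y)} : Finset (Sym2 (Fin n)))
    simp at h1 h2
    omega

/-- Closing a legal play with one more edge. -/
theorem legal_extend {h : List (Sym2 (Fin n))} {e : Sym2 (Fin n)}
    (hl : LegalPlay n h) (he : e ∉ h) (hd : ¬ e.IsDiag)
    (hcm : movesOf (h.length % 2) h = [] ∨
      ∃ e' ∈ movesOf (h.length % 2) h, ∃ v, v ∈ e ∧ v ∈ e') :
    LegalPlay n (h ++ [e]) := by
  obtain ⟨hnd, hdg, hc0, hc1⟩ := hl
  refine ⟨by simp [List.nodup_append, hnd, he]; intro a ha hae; exact he (hae ▸ ha), ?_, ?_, ?_⟩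
  · intro e' he'
    rcases List.mem_append.1 he' with h1 | h1
    · exact hdg e' h1
    · simp at h1; rwa [h1]
  · rw [movesOf_concat]
    rcases Nat.mod_two_eq_zero_or_one h.length with hp | hp
    · rw [if_pos hp]
      rw [hp] at hcm
      exact connectedMoves_concat.2 ⟨hc0, by
        rcases hcm with h1 | h1
        · exact Or.inl h1
        · exact Or.inr h1⟩
    · rw [if_neg (by omega)]
      simpa using hc0
  · rw [movesOf_concat]
    rcases Nat.mod_two_eq_zero_or_one h.length with hp | hp
    · rw [if_neg (by omega)]
      simpa using hc1
    · rw [if_pos hp]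
      rw [hp] at hcm
      exact connectedMoves_concat.2 ⟨hc1, by
        rcases hcm with h1 | h1
        · exact Or.inl h1
        · exact Or.inr h1⟩

end Dev

namespace Dev
variable {n : ℕ} (hn : 5 ≤ n)

theorem sym2_rep (e : Sym2 (Fin n)) : ∃ a b, e = s(a, b) := by
  induction e with
  | _ a b => exact ⟨a, b, rfl⟩

theorem card3_le (a b c : Fin n) : ({a, b, c} : Finset (Fin n)).card ≤ 3 := by
  have h1 : ({b, c} : Finset (Fin n)).card ≤ 2 :=
    le_trans (Finset.card_insert_le _ _) (by simp)
  have := Finset.card_insert_le a ({b, c} : Finset (Fin n))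
  omega

theorem card4_le (a b c d : Fin n) : ({a, b, c, d} : Finset (Fin n)).card ≤ 4 := by
  have h1 := card3_le b c d
  have := Finset.card_insert_le a ({b, c, d} : Finset (Fin n))
  omega

include hn in
/-- A good (Red-`P4`-free) legal consistent play always has a legal
consistent extension. -/
theorem good_not_maximal {h : List (Sym2 (Fin n))} (hl : LegalPlay n h)
    (hc : ConsistentWith (strat hn) h)
    (hnoP4 : ¬ HasP4 (graphOf (movesOf 0 h))) :
    ∃ e, LegalPlay n (h ++ [e]) ∧ ConsistentWith (strat hn) (h ++ [e]) := by
  rcases Nat.lt_or_ge h.length 4 with hlen | hlen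
  · have hsmall : h.length = 0 ∨ h.length = 1 ∨ h.length = 2 ∨ h.length = 3 := by omega
    rcases hsmall with h0 | h1 | h2 | h3
    · -- length 0
      obtain rfl := List.length_eq_zero_iff.1 h0
      refine ⟨dflt hn, legal_extend hl (by simp) ?_ (Or.inl (movesOf_nil _)), ?_⟩
      · simp [dflt, Sym2.mk_isDiag_iff, Fin.ext_iff]
      · exact consistentWith_concat.2 ⟨hc, by intro hcon; simp at hcon⟩
    · -- length 1
      obtain ⟨A, rfl⟩ := List.length_eq_one_iff.1 h1
      obtain ⟨p1, p2, p12⟩ := bb_props (h := [A]) hn (by simp)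
      refine ⟨s(bb1 hn [A], bb2 hn [A]), legal_extend hl ?_ ?_ ?_, ?_⟩
      · simp only [List.mem_singleton]
        intro hcon
        exact p1 ((congrArg (fun t => bb1 hn [A] ∈ t) hcon).mp (Sym2.mem_mk_left _ _))
      · intro hdg
        exact p12 (Sym2.mk_isDiag_iff.1 hdg)
      · exact Or.inl rfl
      · refine consistentWith_concat.2 ⟨hc, fun _ => ?_⟩
        simp [strat]
    · -- length 2
      obtain ⟨A, B, rfl⟩ := List.length_eq_two.1 h2
      have hu : pick hn (fun v => v ∈ A) ∈ A := pick_spec hn _ (sym2_exists_mem A)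
      set u := pick hn (fun v => v ∈ A) with hudef
      obtain ⟨p, q, hA⟩ := sym2_rep A
      obtain ⟨r, s', hB⟩ := sym2_rep B
      obtain ⟨z, hz⟩ := exists_avoid ({p, q, r, s'} : Finset (Fin n))
        (lt_of_le_of_lt (card4_le p q r s') (by omega))
      simp only [Finset.mem_insert, Finset.mem_singleton, not_or] at hz
      obtain ⟨hzp, hzq, hzr, hzs⟩ := hz
      have hzA : ¬ z ∈ A := by rw [hA, Sym2.mem_iff]; tauto
      have hzB : ¬ z ∈ B := by rw [hB, Sym2.mem_iff]; tauto
      have hzu : z ≠ u := by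
        intro hcon
        exact hzA (hcon ▸ hu)
      have hm0 : movesOf 0 [A, B] = [A] := by
        simp [movesOf, List.zipIdx, List.filter]
      refine ⟨s(u, z), legal_extend hl ?_ ?_ ?_, ?_⟩
      · simp only [List.mem_cons, List.mem_singleton, List.not_mem_nil, or_false]
        rintro (hcon | hcon)
        · exact hzA (by rw [← hcon]; exact Sym2.mem_mk_right _ _)
        · exact hzB (by rw [← hcon]; exact Sym2.mem_mk_right _ _)
      · intro hdg
        exact hzu (Sym2.mk_isDiag_iff.1 hdg).symm
      · right
        have hplen : ([A, B] : List (Sym2 (Fin n))).length % 2 = 0 := by simp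
        rw [hplen, hm0]
        exact ⟨A, by simp, u, Sym2.mem_mk_left _ _, hu⟩
      · refine consistentWith_concat.2 ⟨hc, fun hcon => ?_⟩
        simp at hcon
    · -- length 3
      obtain ⟨A, B, C, rfl⟩ := List.length_eq_three.1 h3
      obtain ⟨hc1, hc2, hc3⟩ := ctr_props hn hl hc (by simp)
      obtain ⟨hr0, hr2⟩ := rctr_props hn hl (by simp)
      have hdisj := h1_disj hn hc (n := n) (by simp)
      have hm1 : movesOf 1 [A, B, C] = [B] := by
        simp [movesOf, List.zipIdx, List.filter]
      refine ⟨s(ctr hn [A, B, C], rctr hn [A, B, C]), legal_extend hl ?_ ?_ ?_, ?_⟩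
      · simp only [List.mem_cons, List.mem_singleton, List.not_mem_nil, or_false]
        rintro (hcon | hcon | hcon)
        · exact hc2 ((congrArg (fun t => ctr hn [A, B, C] ∈ t) hcon).mp (Sym2.mem_mk_left _ _))
        · exact hdisj (rctr hn [A, B, C]) ((congrArg (fun t => rctr hn [A, B, C] ∈ t) hcon).mp (Sym2.mem_mk_right _ _)) hr0
        · exact hc3 ((congrArg (fun t => ctr hn [A, B, C] ∈ t) hcon).mp (Sym2.mem_mk_left _ _))
      · intro hdg
        have := Sym2.mk_isDiag_iff.1 hdg
        exact hc2 (this ▸ hr0)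
      · right
        have hplen : ([A, B, C] : List (Sym2 (Fin n))).length % 2 = 1 := by simp
        rw [hplen, hm1]
        exact ⟨B, by simp, ctr hn [A, B, C], Sym2.mem_mk_left _ _, hc1⟩
      · refine consistentWith_concat.2 ⟨hc, fun _ => ?_⟩
        simp [strat]
  · -- length ≥ 4
    obtain ⟨hii, hiii⟩ := red_inv hn h hl hc hnoP4 (by omega)
    have h0mem : h[0]'(by omega) ∈ movesOf 0 h := mem_movesOf.2 ⟨0, by omega, rfl, rfl⟩
    have hblue := blue_all_ctr hn hl hc (by omega)
    rcases Nat.even_or_odd h.length with hpar | hpar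
    · -- Red to move
      have hp0 : h.length % 2 = 0 := Nat.even_iff.mp hpar
      rcases hiii hlen with hstar | htri
      · -- star: extend at the leaf of h[0]
        obtain ⟨u, hum, hrep⟩ := rep_of_mem (hstar _ h0mem)
          (hl.2.1 _ (mem_movesOf_sub h0mem))
        have hcu : ctr hn h ≠ u := by
          intro hcon
          exact hii _ h0mem (by rw [hrep, hcon, Sym2.mem_iff]; right; rfl)
        have hcm : ctr hn h ≠ rctr hn h := by
          intro hcon
          exact hii _ h0mem (by rw [hrep, hcon, Sym2.mem_iff]; left; rfl)
        obtain ⟨z, hz⟩ := exists_avoid ({u, rctr hn h, ctr hn h} : Finset (Fin n))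
          (lt_of_le_of_lt (card3_le _ _ _) (by omega))
        simp only [Finset.mem_insert, Finset.mem_singleton, not_or] at hz
        obtain ⟨hzu, hzm, hzc⟩ := hz
        refine ⟨s(u, z), legal_extend hl ?_ ?_ ?_, ?_⟩
        · intro hcon
          rcases mem_split.1 hcon with hcr | hcb
          · have := hstar _ hcr
            rw [Sym2.mem_iff] at this
            rcases this with h' | h'
            · exact hum h'.symm
            · exact hzm h'.symm
          · have := hblue _ hcb
            rw [Sym2.mem_iff] at this
            rcases this with h' | h'
            · exact hcu h'
            · exact hzc h'.symm
        · intro hdg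
          exact hzu (Sym2.mk_isDiag_iff.1 hdg).symm
        · right
          rw [hp0]
          exact ⟨h[0]'(by omega), h0mem, u, Sym2.mem_mk_left _ _,
            by rw [hrep]; exact Sym2.mem_mk_right _ _⟩
        · refine consistentWith_concat.2 ⟨hc, fun hcon => ?_⟩
          omega
      · -- triangle: extend at the centre
        obtain ⟨x, y, hxy, hmx, hmy, hcx, hcy, hm1, hm2, hm3, hall⟩ := htri
        have hcm : ctr hn h ≠ rctr hn h := by
          intro hcon
          exact hii _ hm1 (by rw [hcon, Sym2.mem_iff]; left; rfl)
        obtain ⟨z, hz⟩ := exists_avoid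
          ({rctr hn h, x, y, ctr hn h} : Finset (Fin n))
          (lt_of_le_of_lt (card4_le _ _ _ _) (by omega))
        simp only [Finset.mem_insert, Finset.mem_singleton, not_or] at hz
        obtain ⟨hzm, hzx, hzy, hzc⟩ := hz
        refine ⟨s(rctr hn h, z), legal_extend hl ?_ ?_ ?_, ?_⟩
        · intro hcon
          rcases mem_split.1 hcon with hcr | hcb
          · rcases hall _ hcr with h' | h' | h'
            · rw [Sym2.eq_iff] at h'
              rcases h' with ⟨_, h'⟩ | ⟨h', _⟩
              · exact hzx h'
              · exact hmx h'
            · rw [Sym2.eq_iff] at h'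
              rcases h' with ⟨_, h'⟩ | ⟨h', _⟩
              · exact hzy h'
              · exact hmy h'
            · have : rctr hn h ∈ s(x, y) := by rw [← h']; exact Sym2.mem_mk_left _ _
              rw [Sym2.mem_iff] at this
              rcases this with h'' | h''
              · exact hmx h''
              · exact hmy h''
          · have := hblue _ hcb
            rw [Sym2.mem_iff] at this
            rcases this with h' | h'
            · exact hcm h'
            · exact hzc h'.symm
        · intro hdg
          exact hzm (Sym2.mk_isDiag_iff.1 hdg).symm
        · right
          rw [hp0]
          exact ⟨s(rctr hn h, x), hm1, rctr hn h, Sym2.mem_mk_left _ _,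
            Sym2.mem_mk_left _ _⟩
        · refine consistentWith_concat.2 ⟨hc, fun hcon => ?_⟩
          omega
    · -- Blue to move : the strategy's move is legal
      have hp1 : h.length % 2 = 1 := Nat.odd_iff.mp hpar
      have hcard := red_card hn hl hc hnoP4 hlen
      have hnex : ∃ v, v ≠ ctr hn h ∧ ¬ s(ctr hn h, v) ∈ h := by
        by_contra hcon
        push_neg at hcon
        have hmaps : ∀ v ∈ Finset.univ.erase (ctr hn h),
            s(ctr hn h, v) ∈ (movesOf 1 h).toFinset := by
          intro v hv
          rw [Finset.mem_erase] at hv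
          have hvh := hcon v hv.1
          rw [List.mem_toFinset]
          rcases mem_split.1 hvh with hcr | hcb
          · exact absurd (Sym2.mem_mk_left _ _) (hii _ hcr)
          · exact hcb
        have hinj : (Finset.univ.erase (ctr hn h)).card ≤ (movesOf 1 h).toFinset.card := by
          apply Finset.card_le_card_of_injOn (fun v => s(ctr hn h, v)) hmaps
          intro v hv w hw heq
          rw [Finset.coe_erase, Set.mem_diff] at hv hw
          rw [Sym2.eq_iff] at heq
          rcases heq with ⟨_, h'⟩ | ⟨h', h''⟩
          · exact h'
          · rw [h'', ← h']
        have e1 : (Finset.univ.erase (ctr hn h)).card = n - 1 := by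
          rw [Finset.card_erase_of_mem (Finset.mem_univ _)]
          simp
        have e2 : (movesOf 1 h).toFinset.card = (movesOf 1 h).length :=
          List.toFinset_card_of_nodup (movesOf_nodup hl.1)
        obtain ⟨l0, l1⟩ := length_movesOf h
        omega
      have hnxt : nxt hn h ≠ ctr hn h ∧ ¬ s(ctr hn h, nxt hn h) ∈ h :=
        pick_spec hn _ hnex
      have h1mem : h[1]'(by omega) ∈ movesOf 1 h := mem_movesOf.2 ⟨1, by omega, rfl, rfl⟩
      obtain ⟨hcc1, _, _⟩ := ctr_props hn hl hc (by omega)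
      refine ⟨s(ctr hn h, nxt hn h), legal_extend hl hnxt.2 ?_ ?_, ?_⟩
      · intro hdg
        exact hnxt.1 (Sym2.mk_isDiag_iff.1 hdg).symm
      · right
        rw [hp1]
        exact ⟨h[1]'(by omega), h1mem, ctr hn h, Sym2.mem_mk_left _ _, hcc1⟩
      · refine consistentWith_concat.2 ⟨hc, fun _ => ?_⟩
        rw [strat, if_neg (by omega), if_neg (by omega)]

include hn in
theorem main : ∀ h : List (Sym2 (Fin n)), MaximalPlay n (strat hn) h →
    RedLosesFirst HasP4 h := by
  intro h hmax
  obtain ⟨hl, hc, hnoext⟩ := hmax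
  by_cases hx : ∃ m ≤ h.length, HasP4 (graphOf (movesOf 0 (h.take m)))
  · obtain ⟨m, hm, hP4⟩ := hx
    exact ⟨m, hm, hP4,
      fun k _ => blue_noP4 hn (legalPlay_take hl k) (consistentWith_take hc k)⟩
  · exfalso
    push_neg at hx
    have hgood := hx h.length le_rfl
    rw [List.take_length] at hgood
    exact hnoext (good_not_maximal hn hl hc hgood)

end Dev

/-- Blue has a winning strategy in the strong CAvoider-CAvoider `P4` game on
`K_n` for `n ≥ 5`. -/
theorem blue_wins_strong_cavoider_cavoider_P4 (n : ℕ) (hn : 5 ≤ n) :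
    ∃ f : List (Sym2 (Fin n)) → Sym2 (Fin n),
      ∀ h : List (Sym2 (Fin n)), MaximalPlay n f h → RedLosesFirst HasP4 h := by
  exact ⟨Dev.strat hn, Dev.main hn⟩
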